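/- Let M be an atomic Puiseux monoid (an additive submonoid of the nonnegative rationals). Then M contains both a purely long and a purely short atom if and only if M has exactly two atoms, in which case the smaller atom is the unique purely long atom and the larger atom is the unique purely short atom. -/

import Mathlib

open Multiset

namespace LF

variable (M : AddSubmonoid ℚ)

/-- An atom of the additive monoid `M`. -/
def IsAtomOf (a : ℚ) : Prop :=
  a ∈ M ∧ a ≠ 0 ∧ ∀ u ∈ M, ∀ v ∈ M, a = u + v → u = 0 ∨ v = 0

/-- Factorizations of `x` in `M`: multisets of atoms summing to `x`. -/
def FactorsOf (x : ℚ) : Set (Multiset ℚ) :=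
  {s | (∀ a ∈ s, IsAtomOf M a) ∧ s.sum = x}

/-- `M` is atomic. -/
def Atomic : Prop := ∀ x ∈ M, x ≠ 0 → (FactorsOf M x).Nonempty

/-- `M` is length-factorial. -/
def LengthFactorial : Prop :=
  ∀ x ∈ M, ∀ s ∈ FactorsOf M x, ∀ t ∈ FactorsOf M x, card s = card t → s = t

/-- `M` is factorial. -/
def Factorial : Prop := ∀ x ∈ M, ∃! s, s ∈ FactorsOf M x

/-- A factorization relation in `M`. -/
def IsRel (z1 z2 : Multiset ℚ) : Prop :=
  (∀ a ∈ z1, IsAtomOf M a) ∧ (∀ a ∈ z2, IsAtomOf M a) ∧ z1.sum = z2.sum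

/-- An irredundant pair: no common atom. -/
def Irredundant (z1 z2 : Multiset ℚ) : Prop := ∀ a, a ∈ z1 → a ∉ z2

/-- `p` is a prime element of `M` (divisibility taken in `M`). -/
def IsPrimeElem (p : ℚ) : Prop :=
  p ∈ M ∧ p ≠ 0 ∧ ∀ a ∈ M, ∀ b ∈ M, (∃ c ∈ M, a + b = p + c) →
    (∃ c ∈ M, a = p + c) ∨ (∃ c ∈ M, b = p + c)

/-- A purely long atom of `M`. -/
def PurelyLong (a : ℚ) : Prop :=
  IsAtomOf M a ∧ ¬ IsPrimeElem M a ∧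
    ∀ z1 z2, IsRel M z1 z2 → Irredundant z1 z2 → card z1 ≠ card z2 →
      a ∈ z1 → card z2 < card z1

/-- A purely short atom of `M`. -/
def PurelyShort (a : ℚ) : Prop :=
  IsAtomOf M a ∧ ¬ IsPrimeElem M a ∧
    ∀ z1 z2, IsRel M z1 z2 → Irredundant z1 z2 → card z1 ≠ card z2 →
      a ∈ z1 → card z1 < card z2
/- ### basic aux -/

lemma aux_atom_pos (hpos : ∀ x ∈ M, 0 ≤ x) {a : ℚ} (ha : IsAtomOf M a) : 0 < a :=
  lt_of_le_of_ne (hpos a ha.1) (Ne.symm ha.2.1)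

lemma aux_sum_replicate (n : ℕ) (x : ℚ) : (replicate n x).sum = (n : ℚ) * x := by
  rw [Multiset.sum_replicate, nsmul_eq_mul]

lemma aux_nsmul_mem {x : ℚ} (hx : x ∈ M) (n : ℕ) : (n : ℚ) * x ∈ M := by
  have := AddSubmonoid.nsmul_mem M hx n
  rwa [nsmul_eq_mul] at this

lemma aux_comm {x y : ℚ} (hx : 0 < x) (hy : 0 < y) :
    ∃ N N' : ℕ, 0 < N ∧ 0 < N' ∧ (N : ℚ) * x = (N' : ℚ) * y := by
  have hxn : 0 < x.num := Rat.num_pos.mpr hx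
  have hyn : 0 < y.num := Rat.num_pos.mpr hy
  have hdx : (x.den : ℚ) * x = (x.num : ℚ) := by
    rw [mul_comm]; exact_mod_cast Rat.mul_den_eq_num x
  have hdy : (y.den : ℚ) * y = (y.num : ℚ) := by
    rw [mul_comm]; exact_mod_cast Rat.mul_den_eq_num y
  refine ⟨y.num.toNat * x.den, x.num.toNat * y.den,
    Nat.mul_pos (by omega) x.pos, Nat.mul_pos (by omega) y.pos, ?_⟩
  have h1 : ((y.num.toNat : ℚ)) = (y.num : ℚ) := by exact_mod_cast Int.toNat_of_nonneg hyn.le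
  have h2 : ((x.num.toNat : ℚ)) = (x.num : ℚ) := by exact_mod_cast Int.toNat_of_nonneg hxn.le
  push_cast [h1, h2]
  rw [mul_assoc, mul_assoc, hdx, hdy]; ring

lemma aux_int3 {x y z : ℚ} (hx : 0 < x) (hy : 0 < y) (hz : 0 < z) :
    ∃ d A B C : ℕ, 0 < d ∧ (A : ℚ) = x * d ∧ (B : ℚ) = y * d ∧ (C : ℚ) = z * d := by
  have hdx : (x.den : ℚ) * x = (x.num : ℚ) := by
    rw [mul_comm]; exact_mod_cast Rat.mul_den_eq_num x
  have hdy : (y.den : ℚ) * y = (y.num : ℚ) := by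
    rw [mul_comm]; exact_mod_cast Rat.mul_den_eq_num y
  have hdz : (z.den : ℚ) * z = (z.num : ℚ) := by
    rw [mul_comm]; exact_mod_cast Rat.mul_den_eq_num z
  have hxn : 0 < x.num := Rat.num_pos.mpr hx
  have hyn : 0 < y.num := Rat.num_pos.mpr hy
  have hzn : 0 < z.num := Rat.num_pos.mpr hz
  have h1 : ((x.num.toNat : ℚ)) = (x.num : ℚ) := by exact_mod_cast Int.toNat_of_nonneg hxn.le
  have h2 : ((y.num.toNat : ℚ)) = (y.num : ℚ) := by exact_mod_cast Int.toNat_of_nonneg hyn.le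
  have h3 : ((z.num.toNat : ℚ)) = (z.num : ℚ) := by exact_mod_cast Int.toNat_of_nonneg hzn.le
  refine ⟨x.den * y.den * z.den, x.num.toNat * (y.den * z.den),
    y.num.toNat * (x.den * z.den), z.num.toNat * (x.den * y.den),
    Nat.mul_pos (Nat.mul_pos x.pos y.pos) z.pos, ?_, ?_, ?_⟩
  · push_cast [h1]; rw [← hdx]; ring
  · push_cast [h2]; rw [← hdy]; ring
  · push_cast [h3]; rw [← hdz]; ring

lemma aux_pair_sum (a b : ℚ) :
    ∀ s : Multiset ℚ, (∀ x ∈ s, x = a ∨ x = b) → ∃ i j : ℕ, s.sum = i * a + j * b := by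
  intro s
  induction s using Multiset.induction_on with
  | empty => exact fun _ => ⟨0, 0, by simp⟩
  | cons x s ih =>
    intro h
    obtain ⟨i, j, hij⟩ := ih (fun y hy => h y (mem_cons_of_mem hy))
    rcases h x (mem_cons_self x s) with rfl | rfl
    · exact ⟨i + 1, j, by rw [sum_cons, hij]; push_cast; ring⟩
    · exact ⟨i, j + 1, by rw [sum_cons, hij]; push_cast; ring⟩

lemma aux_decomp (hat : Atomic M) {a b : ℚ}
    (h2 : ∀ c, IsAtomOf M c → c = a ∨ c = b) :
    ∀ x ∈ M, ∃ i j : ℕ, x = i * a + j * b := by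
  intro x hx
  by_cases hx0 : x = 0
  · exact ⟨0, 0, by simp [hx0]⟩
  · obtain ⟨s, hs1, hs2⟩ := hat x hx hx0
    obtain ⟨i, j, hij⟩ := aux_pair_sum a b s (fun y hy => h2 y (hs1 y hy))
    exact ⟨i, j, by rw [← hs2, hij]⟩

lemma aux_rel {x y : ℚ} (hx : IsAtomOf M x) (hy : IsAtomOf M y) {m n : ℕ}
    (h : (m : ℚ) * x = (n : ℚ) * y) : IsRel M (replicate m x) (replicate n y) := by
  refine ⟨fun c hc => ?_, fun c hc => ?_, ?_⟩
  · rwa [eq_of_mem_replicate hc]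
  · rwa [eq_of_mem_replicate hc]
  · rw [aux_sum_replicate, aux_sum_replicate]; exact h

lemma aux_irr {x y : ℚ} (hxy : x ≠ y) (m n : ℕ) :
    Irredundant (replicate m x) (replicate n y) := by
  intro c hc hc2
  exact hxy ((eq_of_mem_replicate hc).symm.trans (eq_of_mem_replicate hc2))


variable (M : AddSubmonoid ℚ)

open scoped Classical in
lemma aux_minrel (hpos : ∀ x ∈ M, 0 ≤ x) {a b : ℚ} (ha : IsAtomOf M a) (hb : IsAtomOf M b)
    (hab : a < b) :
    ∃ m n : ℕ, (m : ℚ) * a = (n : ℚ) * b ∧ 2 ≤ n ∧ n < m ∧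
      ∀ m' n' : ℕ, 0 < n' → (m' : ℚ) * a = (n' : ℚ) * b → n ≤ n' := by
  have ha0 := aux_atom_pos M hpos ha
  have hb0 := aux_atom_pos M hpos hb
  have hP : ∃ n : ℕ, 0 < n ∧ ∃ m : ℕ, (m : ℚ) * a = (n : ℚ) * b := by
    obtain ⟨N, N', hN, hN', h⟩ := aux_comm hb0 ha0
    exact ⟨N, hN, N', h.symm⟩
  obtain ⟨hn0, m, hm⟩ := Nat.find_spec hP
  set n := Nat.find hP with hn
  have hmin : ∀ m' n' : ℕ, 0 < n' → (m' : ℚ) * a = (n' : ℚ) * b → n ≤ n' :=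
    fun m' n' h1 h2 => Nat.find_min' hP ⟨h1, m', h2⟩
  have hnm : n < m := by
    have h2 : (n : ℚ) * a < (m : ℚ) * a := by
      rw [hm]; exact mul_lt_mul_of_pos_left hab (by exact_mod_cast hn0)
    have : (n : ℚ) < (m : ℚ) := (mul_lt_mul_iff_of_pos_right ha0).mp h2
    exact_mod_cast this
  have h2n : 2 ≤ n := by
    by_contra h
    have hn1 : n = 1 := by omega
    have hm2 : 2 ≤ m := by omega
    have hbma : b = a + ((m - 1 : ℕ) : ℚ) * a := by
      rw [hn1] at hm; push_cast [Nat.cast_sub (by omega : 1 ≤ m)] at hm ⊢; linarith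
    rcases hb.2.2 a ha.1 _ (aux_nsmul_mem M ha.1 (m - 1)) hbma with h | h
    · exact ha.2.1 h
    · have : ((m - 1 : ℕ) : ℚ) * a ≠ 0 := by
        have : (0:ℚ) < ((m - 1 : ℕ) : ℚ) * a := by
          apply mul_pos _ ha0
          exact_mod_cast (by omega : 0 < m - 1)
        linarith
      exact this h
  exact ⟨m, n, hm, h2n, hnm, hmin⟩

lemma aux_a_not_prime (hpos : ∀ x ∈ M, 0 ≤ x) (hat : Atomic M) {a b : ℚ}
    (ha : IsAtomOf M a) (hb : IsAtomOf M b) (hab : a < b)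
    (h2 : ∀ c, IsAtomOf M c → c = a ∨ c = b) : ¬ IsPrimeElem M a := by
  have ha0 := aux_atom_pos M hpos ha
  have hb0 := aux_atom_pos M hpos hb
  obtain ⟨m, n, hrel, h2n, hnm, hmin⟩ := aux_minrel M hpos ha hb hab
  intro hp
  have hyM : ((n - 1 : ℕ) : ℚ) * b ∈ M := aux_nsmul_mem M hb.1 _
  have hcM : ((m - 1 : ℕ) : ℚ) * a ∈ M := aux_nsmul_mem M ha.1 _
  have key : b + ((n - 1 : ℕ) : ℚ) * b = a + ((m - 1 : ℕ) : ℚ) * a := by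
    push_cast [Nat.cast_sub (by omega : 1 ≤ n), Nat.cast_sub (by omega : 1 ≤ m)]
    linarith [hrel]
  rcases hp.2.2 b hb.1 _ hyM ⟨_, hcM, key⟩ with ⟨c, hc, hbc⟩ | ⟨c, hc, hyc⟩
  · rcases hb.2.2 a ha.1 c hc hbc with h | h
    · exact ha.2.1 h
    · rw [h, add_zero] at hbc; exact (ne_of_lt hab) hbc.symm
  · obtain ⟨i, j, hij⟩ := aux_decomp M hat h2 c hc
    have heq : ((n - 1 : ℕ) : ℚ) * b = ((i : ℚ) + 1) * a + (j : ℚ) * b := by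
      rw [hyc, hij]; ring
    have hia : (0:ℚ) < ((i : ℚ) + 1) * a := by positivity
    have hj : j < n - 1 := by
      by_contra h
      have : ((n - 1 : ℕ) : ℚ) ≤ (j : ℚ) := by exact_mod_cast (by omega : n - 1 ≤ j)
      nlinarith
    have heq2 : ((i + 1 : ℕ) : ℚ) * a = ((n - 1 - j : ℕ) : ℚ) * b := by
      push_cast [Nat.cast_sub (by omega : 1 ≤ n)] at heq
      push_cast [Nat.cast_sub (by omega : j ≤ n - 1), Nat.cast_sub (by omega : 1 ≤ n)]
      linarith
    have := hmin (i + 1) (n - 1 - j) (by omega) heq2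
    omega

lemma aux_b_not_prime (hpos : ∀ x ∈ M, 0 ≤ x) (hat : Atomic M) {a b : ℚ}
    (ha : IsAtomOf M a) (hb : IsAtomOf M b) (hab : a < b)
    (h2 : ∀ c, IsAtomOf M c → c = a ∨ c = b) : ¬ IsPrimeElem M b := by
  have ha0 := aux_atom_pos M hpos ha
  have hb0 := aux_atom_pos M hpos hb
  obtain ⟨m, n, hrel, h2n, hnm, hmin⟩ := aux_minrel M hpos ha hb hab
  intro hp
  have hyM : ((m - 1 : ℕ) : ℚ) * a ∈ M := aux_nsmul_mem M ha.1 _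
  have hcM : ((n - 1 : ℕ) : ℚ) * b ∈ M := aux_nsmul_mem M hb.1 _
  have key : a + ((m - 1 : ℕ) : ℚ) * a = b + ((n - 1 : ℕ) : ℚ) * b := by
    push_cast [Nat.cast_sub (by omega : 1 ≤ n), Nat.cast_sub (by omega : 1 ≤ m)]
    linarith [hrel]
  rcases hp.2.2 a ha.1 _ hyM ⟨_, hcM, key⟩ with ⟨c, hc, hbc⟩ | ⟨c, hc, hyc⟩
  · have := hpos c hc; linarith
  · obtain ⟨i, j, hij⟩ := aux_decomp M hat h2 c hc
    have heq : ((m - 1 : ℕ) : ℚ) * a = (i : ℚ) * a + ((j : ℚ) + 1) * b := by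
      rw [hyc, hij]; ring
    have hjb : (0:ℚ) < ((j : ℚ) + 1) * b := by positivity
    have hi : i < m - 1 := by
      by_contra h
      have : ((m - 1 : ℕ) : ℚ) ≤ (i : ℚ) := by exact_mod_cast (by omega : m - 1 ≤ i)
      nlinarith
    have heq2 : ((m - 1 - i : ℕ) : ℚ) * a = ((j + 1 : ℕ) : ℚ) * b := by
      push_cast [Nat.cast_sub (by omega : 1 ≤ m)] at heq
      push_cast [Nat.cast_sub (by omega : i ≤ m - 1), Nat.cast_sub (by omega : 1 ≤ m)]
      linarith
    have hge := hmin (m - 1 - i) (j + 1) (by omega) heq2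
    -- (j+1)*b = (m-1-i)*a < m*a = n*b  so j+1 < n, contradiction with n ≤ j+1
    have h3 : ((m - 1 - i : ℕ) : ℚ) * a < (m : ℚ) * a := by
      apply mul_lt_mul_of_pos_right _ ha0
      exact_mod_cast (by omega : m - 1 - i < m)
    have h4 : ((j + 1 : ℕ) : ℚ) * b < (n : ℚ) * b := by
      rw [← heq2, ← hrel]; exact h3
    have : ((j + 1 : ℕ) : ℚ) < (n : ℚ) := (mul_lt_mul_iff_of_pos_right hb0).mp h4
    have : j + 1 < n := by exact_mod_cast this
    omega


lemma aux_shape (hpos : ∀ x ∈ M, 0 ≤ x) {x y : ℚ}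
    (h2 : ∀ c, IsAtomOf M c → c = x ∨ c = y) (hxy : x ≠ y)
    {z1 z2 : Multiset ℚ} (hrel : IsRel M z1 z2) (hirr : Irredundant z1 z2) (hmem : x ∈ z1) :
    z1 = replicate (card z1) x ∧ z2 = replicate (card z2) y ∧
      0 < card z1 ∧ 0 < card z2 ∧ (card z1 : ℚ) * x = (card z2 : ℚ) * y := by
  have hx0 : 0 < x := aux_atom_pos M hpos (hrel.1 x hmem)
  have hsum1 : 0 < z1.sum := by
    obtain ⟨t, rfl⟩ := exists_cons_of_mem hmem
    rw [sum_cons]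
    have : 0 ≤ t.sum := sum_nonneg (fun c hc => hpos c (hrel.1 c (mem_cons_of_mem hc)).1)
    linarith
  have hz1 : ∀ c ∈ z1, c = x := by
    intro c hc
    rcases h2 c (hrel.1 c hc) with h | h
    · exact h
    · exfalso
      have hz2 : z2 = 0 := by
        rw [eq_zero_iff_forall_notMem]
        intro d hd
        rcases h2 d (hrel.2.1 d hd) with rfl | rfl
        · exact hirr d hmem hd
        · exact hirr d (h ▸ hc) hd
      have hs := hrel.2.2
      rw [hz2, sum_zero] at hs
      rw [hs] at hsum1
      exact lt_irrefl 0 hsum1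
  have hz2 : ∀ c ∈ z2, c = y := by
    intro c hc
    rcases h2 c (hrel.2.1 c hc) with rfl | h
    · exact absurd hc (hirr c hmem)
    · exact h
  have e1 : z1 = replicate (card z1) x := (eq_replicate_card).mpr hz1
  have e2 : z2 = replicate (card z2) y := (eq_replicate_card).mpr hz2
  have hsums : (card z1 : ℚ) * x = (card z2 : ℚ) * y := by
    have := hrel.2.2
    rw [e1, e2, aux_sum_replicate, aux_sum_replicate] at this
    exact this
  have hc1 : 0 < card z1 := card_pos.mpr (fun h => by simp [h] at hmem)
  have hc2 : 0 < card z2 := by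
    rcases Nat.eq_zero_or_pos (card z2) with h | h
    · exfalso
      rw [h] at hsums
      simp only [Nat.cast_zero, zero_mul] at hsums
      have hpos1 : (0:ℚ) < (card z1 : ℚ) * x := mul_pos (by exact_mod_cast hc1) hx0
      rw [hsums] at hpos1
      exact lt_irrefl 0 hpos1
    · exact h
  exact ⟨e1, e2, hc1, hc2, hsums⟩

lemma aux_two_atoms (hpos : ∀ x ∈ M, 0 ≤ x) (hat : Atomic M) {a b : ℚ}
    (ha : IsAtomOf M a) (hb : IsAtomOf M b) (hab : a < b)
    (h2 : ∀ c, IsAtomOf M c → c = a ∨ c = b) :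
    PurelyLong M a ∧ PurelyShort M b ∧
      (∀ c, PurelyLong M c → c = a) ∧ (∀ c, PurelyShort M c → c = b) := by
  have ha0 := aux_atom_pos M hpos ha
  have hb0 := aux_atom_pos M hpos hb
  have hne : a ≠ b := ne_of_lt hab
  have hLa : PurelyLong M a := by
    refine ⟨ha, aux_a_not_prime M hpos hat ha hb hab h2, ?_⟩
    intro z1 z2 hrel hirr _ hmem
    obtain ⟨e1, e2, hc1, hc2, hsums⟩ := aux_shape M hpos h2 hne hrel hirr hmem
    -- card z2 * b = card z1 * a < card z1 * b
    have h1 : (card z1 : ℚ) * a < (card z1 : ℚ) * b :=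
      mul_lt_mul_of_pos_left hab (by exact_mod_cast hc1)
    rw [hsums] at h1
    have : (card z2 : ℚ) < (card z1 : ℚ) := (mul_lt_mul_iff_of_pos_right hb0).mp h1
    exact_mod_cast this
  have hSb : PurelyShort M b := by
    refine ⟨hb, aux_b_not_prime M hpos hat ha hb hab h2, ?_⟩
    intro z1 z2 hrel hirr _ hmem
    obtain ⟨e1, e2, hc1, hc2, hsums⟩ :=
      aux_shape M hpos (fun c hc => (h2 c hc).symm) hne.symm hrel hirr hmem
    -- card z1 * b = card z2 * a, b > a: card z1 < card z2
    have h1 : (card z1 : ℚ) * a < (card z1 : ℚ) * b :=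
      mul_lt_mul_of_pos_left hab (by exact_mod_cast hc1)
    rw [hsums] at h1
    have : (card z1 : ℚ) < (card z2 : ℚ) := (mul_lt_mul_iff_of_pos_right ha0).mp h1
    exact_mod_cast this
  refine ⟨hLa, hSb, ?_, ?_⟩
  · intro c hc
    rcases h2 c hc.1 with h | rfl
    · exact h
    · exfalso
      obtain ⟨m, n, hrel, h2n, hnm, _⟩ := aux_minrel M hpos ha hb hab
      have := hc.2.2 (replicate n c) (replicate m a)
        (aux_rel M hc.1 ha hrel.symm) (aux_irr hne.symm n m)
        (by simp only [card_replicate]; omega)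
        (mem_replicate.mpr ⟨by omega, rfl⟩)
      simp only [card_replicate] at this
      omega
  · intro c hc
    rcases h2 c hc.1 with rfl | h
    · exfalso
      obtain ⟨m, n, hrel, h2n, hnm, _⟩ := aux_minrel M hpos hc.1 hb hab
      have := hc.2.2 (replicate m c) (replicate n b)
        (aux_rel M hc.1 hb hrel) (aux_irr hne m n)
        (by simp only [card_replicate]; omega)
        (mem_replicate.mpr ⟨by omega, rfl⟩)
      simp only [card_replicate] at this
      omega
    · exact h

lemma aux_lt_of_long (hpos : ∀ x ∈ M, 0 ≤ x) {a c : ℚ} (hL : PurelyLong M a)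
    (hc : IsAtomOf M c) (hne : c ≠ a) : a < c := by
  have ha0 := aux_atom_pos M hpos hL.1
  have hc0 := aux_atom_pos M hpos hc
  obtain ⟨N, N', hN, hN', h⟩ := aux_comm ha0 hc0
  have hNN : N ≠ N' := by
    intro hEq
    rw [hEq] at h
    exact hne (mul_left_cancel₀ (by exact_mod_cast hN'.ne' : ((N' : ℚ)) ≠ 0) h).symm
  have := hL.2.2 (replicate N a) (replicate N' c)
    (aux_rel M hL.1 hc h) (aux_irr hne.symm N N')
    (by simp only [card_replicate]; exact fun hEq => hNN hEq)
    (mem_replicate.mpr ⟨hN.ne', rfl⟩)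
  simp only [card_replicate] at this
  -- N' < N, N*a = N'*c ⇒ a < c
  have h1 : (N' : ℚ) * a < (N : ℚ) * a :=
    mul_lt_mul_of_pos_right (by exact_mod_cast this) ha0
  rw [h] at h1
  exact (mul_lt_mul_iff_of_pos_left (by exact_mod_cast hN')).mp h1

lemma aux_gt_of_short (hpos : ∀ x ∈ M, 0 ≤ x) {b c : ℚ} (hS : PurelyShort M b)
    (hc : IsAtomOf M c) (hne : c ≠ b) : c < b := by
  have hb0 := aux_atom_pos M hpos hS.1
  have hc0 := aux_atom_pos M hpos hc
  obtain ⟨N, N', hN, hN', h⟩ := aux_comm hb0 hc0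
  have hNN : N ≠ N' := by
    intro hEq
    rw [hEq] at h
    exact hne (mul_left_cancel₀ (by exact_mod_cast hN'.ne' : ((N' : ℚ)) ≠ 0) h).symm
  have := hS.2.2 (replicate N b) (replicate N' c)
    (aux_rel M hS.1 hc h) (aux_irr hne.symm N N')
    (by simp only [card_replicate]; exact fun hEq => hNN hEq)
    (mem_replicate.mpr ⟨hN.ne', rfl⟩)
  simp only [card_replicate] at this
  -- N < N', N*b = N'*c ⇒ c < b
  have h1 : (N : ℚ) * b < (N' : ℚ) * b :=
    mul_lt_mul_of_pos_right (by exact_mod_cast this) hb0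
  rw [h] at h1
  exact (mul_lt_mul_iff_of_pos_left (by exact_mod_cast hN')).mp h1

lemma aux_single_prime (hat : Atomic M) {a : ℚ} (ha : IsAtomOf M a)
    (h1 : ∀ c, IsAtomOf M c → c = a) : IsPrimeElem M a := by
  have hdec : ∀ x ∈ M, ∃ i : ℕ, x = (i : ℚ) * a := by
    intro x hx
    obtain ⟨i, j, hij⟩ := aux_decomp M hat (fun c hc => Or.inl (h1 c hc)) x hx
    exact ⟨i + j, by rw [hij]; push_cast; ring⟩
  refine ⟨ha.1, ha.2.1, ?_⟩
  rintro x hx y hy ⟨c, hc, hxy⟩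
  obtain ⟨i, rfl⟩ := hdec x hx
  obtain ⟨j, rfl⟩ := hdec y hy
  obtain ⟨k, rfl⟩ := hdec c hc
  have hsum : ((i + j : ℕ) : ℚ) * a = ((k + 1 : ℕ) : ℚ) * a := by push_cast; linarith [hxy]
  have : i + j = k + 1 := by
    have := mul_right_cancel₀ ha.2.1 hsum
    exact_mod_cast this
  rcases (by omega : 1 ≤ i ∨ 1 ≤ j) with h | h
  · exact Or.inl ⟨((i - 1 : ℕ) : ℚ) * a, aux_nsmul_mem M ha.1 _, by
      push_cast [Nat.cast_sub h]; ring⟩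
  · exact Or.inr ⟨((j - 1 : ℕ) : ℚ) * a, aux_nsmul_mem M ha.1 _, by
      push_cast [Nat.cast_sub h]; ring⟩

lemma aux_long_ne_short (hpos : ∀ x ∈ M, 0 ≤ x) (hat : Atomic M) {a b : ℚ}
    (hL : PurelyLong M a) (hS : PurelyShort M b) : a ≠ b := by
  intro hEq
  subst hEq
  by_cases h1 : ∀ c, IsAtomOf M c → c = a
  · exact hL.2.1 (aux_single_prime M hat hL.1 h1)
  · push_neg at h1
    obtain ⟨c, hc, hca⟩ := h1
    have := aux_lt_of_long M hpos hL hc hca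
    have := aux_gt_of_short M hpos hS hc hca
    linarith

lemma aux_no_third (hpos : ∀ x ∈ M, 0 ≤ x) {a b c : ℚ}
    (hL : PurelyLong M a) (hS : PurelyShort M b)
    (hc : IsAtomOf M c) (hca : c ≠ a) (hcb : c ≠ b) : False := by
  have ha0 := aux_atom_pos M hpos hL.1
  have hb0 := aux_atom_pos M hpos hS.1
  have hc0 := aux_atom_pos M hpos hc
  have hac : a < c := aux_lt_of_long M hpos hL hc hca
  have hcbb : c < b := aux_gt_of_short M hpos hS hc hcb
  obtain ⟨d, A, B, C, hd, hA, hB, hC⟩ := aux_int3 ha0 hb0 hc0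
  have hd0 : (0 : ℚ) < (d : ℚ) := by exact_mod_cast hd
  have hAC : A < C := by
    have : (A : ℚ) < (C : ℚ) := by
      rw [hA, hC]; exact mul_lt_mul_of_pos_right hac hd0
    exact_mod_cast this
  have hCB : C < B := by
    have : (C : ℚ) < (B : ℚ) := by
      rw [hC, hB]; exact mul_lt_mul_of_pos_right hcbb hd0
    exact_mod_cast this
  have hA0 : 0 < A := by
    have : (0 : ℚ) < (A : ℚ) := by rw [hA]; positivity
    exact_mod_cast this
  set u := C + B with hu
  set v := C - A with hv
  set w := A + B with hw
  have hkey : (u : ℚ) * a + (v : ℚ) * b = (w : ℚ) * c := by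
    have hmul : (u : ℚ) * (a * d) + (v : ℚ) * (b * d) = (w : ℚ) * (c * d) := by
      rw [← hA, ← hB, ← hC, hu, hv, hw]
      push_cast [Nat.cast_sub hAC.le]
      ring
    have : ((u : ℚ) * a + (v : ℚ) * b) * d = ((w : ℚ) * c) * d := by
      calc ((u : ℚ) * a + (v : ℚ) * b) * d = (u : ℚ) * (a * d) + (v : ℚ) * (b * d) := by ring
        _ = (w : ℚ) * (c * d) := hmul
        _ = ((w : ℚ) * c) * d := by ring
    exact mul_right_cancel₀ hd0.ne' this
  set z1 : Multiset ℚ := replicate u a + replicate v b with hz1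
  set z2 : Multiset ℚ := replicate w c with hz2
  have hmemz1 : ∀ x ∈ z1, x = a ∨ x = b := by
    intro x hx
    rcases mem_add.mp hx with h | h
    · exact Or.inl (eq_of_mem_replicate h)
    · exact Or.inr (eq_of_mem_replicate h)
  have hrel : IsRel M z1 z2 := by
    refine ⟨fun x hx => ?_, fun x hx => ?_, ?_⟩
    · rcases hmemz1 x hx with rfl | rfl
      · exact hL.1
      · exact hS.1
    · rw [eq_of_mem_replicate hx]; exact hc
    · rw [hz1, hz2, sum_add, aux_sum_replicate, aux_sum_replicate, aux_sum_replicate]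
      exact hkey
  have hirr : Irredundant z1 z2 := by
    intro x hx hx2
    have := eq_of_mem_replicate hx2
    rcases hmemz1 x hx with rfl | rfl
    · exact hca this.symm
    · exact hcb this.symm
  have hcards : card z1 = u + v := by rw [hz1, card_add, card_replicate, card_replicate]
  have hcards2 : card z2 = w := by rw [hz2, card_replicate]
  have hbne : card z1 ≠ card z2 := by rw [hcards, hcards2]; omega
  have hbmem : b ∈ z1 := by
    rw [hz1]
    exact mem_add.mpr (Or.inr (mem_replicate.mpr ⟨by omega, rfl⟩))
  have := hS.2.2 z1 z2 hrel hirr hbne hbmem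
  rw [hcards, hcards2] at this
  omega

/-- An atomic Puiseux monoid `M` has both a purely long and a purely short
atom if and only if it has exactly two atoms; in that case the smaller atom is the unique
purely long atom and the larger atom is the unique purely short atom. -/
theorem stmt15 (hpos : ∀ x ∈ M, 0 ≤ x) (hat : Atomic M) :
    (((∃ a, PurelyLong M a) ∧ (∃ a, PurelyShort M a)) ↔
        {a | IsAtomOf M a}.encard = 2) ∧
      ∀ a b : ℚ, IsAtomOf M a → IsAtomOf M b → a < b →
        {c | IsAtomOf M c} = {a, b} →
        {c | PurelyLong M c} = {a} ∧ {c | PurelyShort M c} = {b} := by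
  constructor
  · constructor
    · rintro ⟨⟨a, hL⟩, ⟨b, hS⟩⟩
      have hne : a ≠ b := aux_long_ne_short M hpos hat hL hS
      have hset : {c | IsAtomOf M c} = {a, b} := by
        ext c
        simp only [Set.mem_setOf_eq, Set.mem_insert_iff, Set.mem_singleton_iff]
        constructor
        · intro hc
          by_contra h
          push_neg at h
          exact aux_no_third M hpos hL hS hc h.1 h.2
        · rintro (rfl | rfl)
          · exact hL.1
          · exact hS.1
      rw [hset]
      exact Set.encard_pair hne
    · intro h
      obtain ⟨a, b, hne, hset⟩ := Set.encard_eq_two.mp h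
      have ha : IsAtomOf M a := by
        have : a ∈ {c | IsAtomOf M c} := by rw [hset]; exact Set.mem_insert a {b}
        exact this
      have hb : IsAtomOf M b := by
        have : b ∈ {c | IsAtomOf M c} := by
          rw [hset]; exact Set.mem_insert_of_mem a rfl
        exact this
      have h2 : ∀ c, IsAtomOf M c → c = a ∨ c = b := by
        intro c hc
        have : c ∈ ({a, b} : Set ℚ) := by rw [← hset]; exact hc
        simpa using this
      rcases hne.lt_or_gt with hab | hab
      · obtain ⟨hLa, hSb, _, _⟩ := aux_two_atoms M hpos hat ha hb hab h2
        exact ⟨⟨a, hLa⟩, ⟨b, hSb⟩⟩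
      · obtain ⟨hLb, hSa, _, _⟩ := aux_two_atoms M hpos hat hb ha hab
          (fun c hc => (h2 c hc).symm)
        exact ⟨⟨b, hLb⟩, ⟨a, hSa⟩⟩
  · intro a b ha hb hab hset
    have h2 : ∀ c, IsAtomOf M c → c = a ∨ c = b := by
      intro c hc
      have : c ∈ ({a, b} : Set ℚ) := by rw [← hset]; exact hc
      simpa using this
    obtain ⟨hLa, hSb, hu1, hu2⟩ := aux_two_atoms M hpos hat ha hb hab h2
    constructor
    · ext c
      simp only [Set.mem_setOf_eq, Set.mem_singleton_iff]
      exact ⟨fun h => hu1 c h, fun h => h ▸ hLa⟩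
    · ext c
      simp only [Set.mem_setOf_eq, Set.mem_singleton_iff]
      exact ⟨fun h => hu2 c h, fun h => h ▸ hSb⟩

end LF
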